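/- Every normalized orthomorphism θ of G = Z₂ × Z₄ has exactly one of the following forms, where x is the unique element of order 2 with o(θ(x))=2, and a ∈ A₄₄ \ θ(A₄₄): (i) the 7-cycle (a, ax, axθ(x), xθ(x), aθ(x), x, θ(x)) with xθ(x) = a²; (ii) (a, ax, axθ(x), xθ(x))(θ(x), aθ(x), x) with xθ(x) ≠ a²; (iii) (a, ax, axθ(x), x, θ(x))(aθ(x), xθ(x)) with xθ(x) ≠ a²; (iv) the 7-cycle (a, ax, axθ(x), x, θ(x), aθ(x), xθ(x)) with xθ(x) = a². -/
import Mathlib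


/-- The group `ℤ₂ × ℤ₄` (written additively). -/
abbrev G24 : Type := ZMod 2 × ZMod 4

/-- A normalized orthomorphism: a bijection fixing the identity whose associated
complete mapping `x ↦ -x + θ x` (i.e. `x⁻¹θ(x)` in additive notation) is a bijection. -/
def IsNormOrtho (θ : G24 → G24) : Prop :=
  Function.Bijective θ ∧ θ 0 = 0 ∧ Function.Bijective (fun x => -x + θ x)

/-- Orthogonality of orthomorphisms: `x ↦ θ₁(x)⁻¹θ₂(x)` is a bijection. -/
def Orthogonal (θ₁ θ₂ : G24 → G24) : Prop :=
  Function.Bijective (fun x => -θ₁ x + θ₂ x)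

/-- `A i j θ = {x : order of x is i and order of θ(x) is j}`. -/
def A (i j : ℕ) (θ : G24 → G24) : Set G24 :=
  {x | addOrderOf x = i ∧ addOrderOf (θ x) = j}

/- ### Auxiliary material -/

lemma nsmul4 : ∀ z : G24, 4 • z = 0 := by decide

lemma ord_dvd4 (z : G24) : addOrderOf z ∣ 4 :=
  addOrderOf_dvd_of_nsmul_eq_zero (nsmul4 z)

lemma ord2_iff (z : G24) : addOrderOf z = 2 ↔ z ≠ 0 ∧ z + z = 0 := by
  constructor
  · intro h
    refine ⟨fun hz => by simp [hz] at h, ?_⟩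
    have h2 := addOrderOf_nsmul_eq_zero z
    rw [h, two_nsmul] at h2
    exact h2
  · rintro ⟨h0, h2⟩
    have hd : addOrderOf z ∣ 2 := addOrderOf_dvd_of_nsmul_eq_zero (by rw [two_nsmul]; exact h2)
    have h1 : addOrderOf z ≠ 1 := by simp [AddMonoid.addOrderOf_eq_one_iff, h0]
    rcases (Nat.dvd_prime Nat.prime_two).mp hd with h | h
    · exact absurd h h1
    · exact h

lemma ord4_iff (z : G24) : addOrderOf z = 4 ↔ z + z ≠ 0 := by
  constructor
  · intro h hc
    have hd : addOrderOf z ∣ 2 := addOrderOf_dvd_of_nsmul_eq_zero (by rw [two_nsmul]; exact hc)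
    rw [h] at hd
    norm_num at hd
  · intro h2
    have hne1 : addOrderOf z ≠ 1 := by
      intro hc
      exact h2 (by rw [AddMonoid.addOrderOf_eq_one_iff.mp hc]; simp)
    have hne2 : addOrderOf z ≠ 2 := fun hc => h2 ((ord2_iff z).mp hc).2
    obtain ⟨c, hc⟩ := ord_dvd4 z
    have hle : addOrderOf z ≤ 4 := Nat.le_of_dvd (by norm_num) ⟨c, hc⟩
    have hpos : 0 < addOrderOf z := addOrderOf_pos z
    interval_cases h : addOrderOf z <;> omega

/-- The function built from the eight prescribed values. -/
def F (x t a vt vxt va vax vat vaxt : G24) (z : G24) : G24 :=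
  if z = 0 then 0 else if z = x then t else if z = t then vt else if z = x + t then vxt
  else if z = a then va else if z = a + x then vax else if z = a + t then vat else vaxt

/-- The conclusion of the classification theorem, abstracted. -/
abbrev Q (x a : G24) (θ : G24 → G24) : Prop :=
    (x + θ x = a + a ∧ θ = fun z =>
      if z = a then a + x
      else if z = a + x then a + x + θ x
      else if z = a + x + θ x then x + θ x
      else if z = x + θ x then a + θ x
      else if z = a + θ x then x
      else if z = x then θ x
      else if z = θ x then a
      else z) ∨
    (x + θ x ≠ a + a ∧ θ = fun z =>
      if z = a then a + x
      else if z = a + x then a + x + θ x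
      else if z = a + x + θ x then x + θ x
      else if z = x + θ x then a
      else if z = θ x then a + θ x
      else if z = a + θ x then x
      else if z = x then θ x
      else z) ∨
    (x + θ x ≠ a + a ∧ θ = fun z =>
      if z = a then a + x
      else if z = a + x then a + x + θ x
      else if z = a + x + θ x then x
      else if z = x then θ x
      else if z = θ x then a
      else if z = a + θ x then x + θ x
      else if z = x + θ x then a + θ x
      else z) ∨
    (x + θ x = a + a ∧ θ = fun z =>
      if z = a then a + x
      else if z = a + x then a + x + θ x
      else if z = a + x + θ x then x
      else if z = x then θ x
      else if z = θ x then a + θ x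
      else if z = a + θ x then x + θ x
      else if z = x + θ x then a
      else z)

set_option maxHeartbeats 800000 in
set_option synthInstance.maxSize 5000 in
lemma facts : ∀ x t a : G24, (x ≠ 0 ∧ x + x = 0 ∧ t ≠ 0 ∧ t + t = 0 ∧ t ≠ x ∧ a + a ≠ 0) →
    ((x+t ≠ 0 ∧ (x+t) + (x+t) = 0 ∧ x+t ≠ x ∧ x+t ≠ t) ∧
     (a ≠ 0 ∧ a ≠ x ∧ a ≠ t ∧ a ≠ x+t) ∧
     (a+x ≠ 0 ∧ a+x ≠ x ∧ a+x ≠ t ∧ a+x ≠ x+t ∧ a+x ≠ a) ∧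
     (a+t ≠ 0 ∧ a+t ≠ x ∧ a+t ≠ t ∧ a+t ≠ x+t ∧ a+t ≠ a ∧ a+t ≠ a+x) ∧
     (a+x+t ≠ 0 ∧ a+x+t ≠ x ∧ a+x+t ≠ t ∧ a+x+t ≠ x+t ∧ a+x+t ≠ a ∧ a+x+t ≠ a+x ∧ a+x+t ≠ a+t) ∧
     (∀ z : G24, z = 0 ∨ z = x ∨ z = t ∨ z = x+t ∨ z = a ∨ z = a+x ∨ z = a+t ∨ z = a+x+t)) := by
  decide

set_option maxHeartbeats 400000 in
set_option synthInstance.maxSize 5000 in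
lemma inv3 : ∀ x t z : G24,
    (x ≠ 0 ∧ x + x = 0 ∧ t ≠ 0 ∧ t + t = 0 ∧ t ≠ x ∧ z ≠ 0 ∧ z + z = 0 ∧ z ≠ x) →
    (z = t ∨ z = x + t) := by decide

set_option maxHeartbeats 8000000 in
set_option maxRecDepth 20000 in
set_option synthInstance.maxSize 5000 in
set_option synthInstance.maxHeartbeats 2000000 in
lemma key : ∀ x t a : G24,
  (x ≠ 0 ∧ x + x = 0 ∧ t ≠ 0 ∧ t + t = 0 ∧ t ≠ x ∧ a + a ≠ 0 ∧ -x + t ≠ 0) →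
  ∀ vt : G24, (vt + vt ≠ 0 ∧ -t + vt ≠ 0 ∧ -t + vt ≠ -x + t) →
  ∀ vxt : G24, (vxt + vxt ≠ 0 ∧ vxt ≠ vt ∧ (a = vt ∨ a = vxt) ∧
    -(x+t) + vxt ≠ 0 ∧ -(x+t) + vxt ≠ -x + t ∧ -(x+t) + vxt ≠ -t + vt) →
  ∀ va : G24, (va + va ≠ 0 ∧ va ≠ vt ∧ va ≠ vxt ∧
    -a + va ≠ 0 ∧ -a + va ≠ -x + t ∧ -a + va ≠ -t + vt ∧ -a + va ≠ -(x+t) + vxt) →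
  ∀ vax : G24, (vax ≠ 0 ∧ vax ≠ t ∧ vax ≠ vt ∧ vax ≠ vxt ∧ vax ≠ va ∧
    -(a+x) + vax ≠ 0 ∧ -(a+x) + vax ≠ -x + t ∧ -(a+x) + vax ≠ -t + vt ∧
    -(a+x) + vax ≠ -(x+t) + vxt ∧ -(a+x) + vax ≠ -a + va) →
  ∀ vat : G24, (vat ≠ 0 ∧ vat ≠ t ∧ vat ≠ vt ∧ vat ≠ vxt ∧ vat ≠ va ∧ vat ≠ vax ∧
    -(a+t) + vat ≠ 0 ∧ -(a+t) + vat ≠ -x + t ∧ -(a+t) + vat ≠ -t + vt ∧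
    -(a+t) + vat ≠ -(x+t) + vxt ∧ -(a+t) + vat ≠ -a + va ∧ -(a+t) + vat ≠ -(a+x) + vax) →
  ∀ vaxt : G24, (vaxt ≠ 0 ∧ vaxt ≠ t ∧ vaxt ≠ vt ∧ vaxt ≠ vxt ∧ vaxt ≠ va ∧ vaxt ≠ vax ∧ vaxt ≠ vat ∧
    -(a+x+t) + vaxt ≠ 0 ∧ -(a+x+t) + vaxt ≠ -x + t ∧ -(a+x+t) + vaxt ≠ -t + vt ∧
    -(a+x+t) + vaxt ≠ -(x+t) + vxt ∧ -(a+x+t) + vaxt ≠ -a + va ∧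
    -(a+x+t) + vaxt ≠ -(a+x) + vax ∧ -(a+x+t) + vaxt ≠ -(a+t) + vat) →
  Q x a (F x t a vt vxt va vax vat vaxt) := by decide

/-- Every normalized orthomorphism of `ℤ₂ × ℤ₄` has exactly one of four forms
(the four disjuncts are mutually exclusive). Here `x` is the unique element of
`A₂₂` and `a ∈ A₄₄ \ θ(A₄₄)`. -/
theorem orth_classification (θ : G24 → G24) (hθ : IsNormOrtho θ) (x a : G24)
    (hx : A 2 2 θ = {x}) (ha : a ∈ A 4 4 θ \ θ '' A 4 4 θ) :
    (x + θ x = a + a ∧ θ = fun z =>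
      if z = a then a + x
      else if z = a + x then a + x + θ x
      else if z = a + x + θ x then x + θ x
      else if z = x + θ x then a + θ x
      else if z = a + θ x then x
      else if z = x then θ x
      else if z = θ x then a
      else z) ∨
    (x + θ x ≠ a + a ∧ θ = fun z =>
      if z = a then a + x
      else if z = a + x then a + x + θ x
      else if z = a + x + θ x then x + θ x
      else if z = x + θ x then a
      else if z = θ x then a + θ x
      else if z = a + θ x then x
      else if z = x then θ x
      else z) ∨
    (x + θ x ≠ a + a ∧ θ = fun z =>
      if z = a then a + x
      else if z = a + x then a + x + θ x
      else if z = a + x + θ x then x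
      else if z = x then θ x
      else if z = θ x then a
      else if z = a + θ x then x + θ x
      else if z = x + θ x then a + θ x
      else z) ∨
    (x + θ x = a + a ∧ θ = fun z =>
      if z = a then a + x
      else if z = a + x then a + x + θ x
      else if z = a + x + θ x then x
      else if z = x then θ x
      else if z = θ x then a + θ x
      else if z = a + θ x then x + θ x
      else if z = x + θ x then a
      else z) := by
  obtain ⟨⟨hinj, hsurj⟩, h0, hcmb⟩ := hθ
  have hcm := hcmb.1
  have hx' : ∀ z : G24, (addOrderOf z = 2 ∧ addOrderOf (θ z) = 2) ↔ z = x := by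
    intro z
    have := Set.ext_iff.mp hx z
    simpa [A] using this
  have ha4 : addOrderOf a = 4 := ha.1.1
  have haθ4 : addOrderOf (θ a) = 4 := ha.1.2
  have hnim := ha.2
  have hxo := (hx' x).mpr rfl
  obtain ⟨hx0, hxx⟩ := (ord2_iff x).mp hxo.1
  obtain ⟨ht0, htt⟩ := (ord2_iff (θ x)).mp hxo.2
  have ha2 : a + a ≠ 0 := (ord4_iff a).mp ha4
  have hva2 : θ a + θ a ≠ 0 := (ord4_iff (θ a)).mp haθ4
  have hne : ∀ {p q : G24}, p ≠ q → θ p ≠ θ q := fun h hc => h (hinj hc)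
  have hne0 : ∀ {p : G24}, p ≠ 0 → θ p ≠ 0 := fun {p} h hc => h (hinj (by rw [hc, h0]))
  have cmne : ∀ {p q : G24}, p ≠ q → -p + θ p ≠ -q + θ q := fun h hc => h (hcm hc)
  have cm0 : ∀ {p : G24}, p ≠ 0 → -p + θ p ≠ 0 := by
    intro p h hc
    apply h
    apply hcm
    show -p + θ p = -0 + θ 0
    rw [hc, h0]; simp
  have htx : θ x ≠ x := by
    intro h
    apply hx0
    apply hcm
    show -x + θ x = -0 + θ 0
    rw [h, h0]; simp
  obtain ⟨⟨f1, f2, f3, f4⟩, ⟨g1, g2, g3, g4⟩, ⟨i1, i2, i3, i4, i5⟩,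
      ⟨j1, j2, j3, j4, j5, j6⟩, ⟨k1, k2, k3, k4, k5, k6, k7⟩, cover⟩ :=
    facts x (θ x) a ⟨hx0, hxx, ht0, htt, htx, ha2⟩
  have hvt2 : θ (θ x) + θ (θ x) ≠ 0 := by
    intro hc
    exact htx ((hx' (θ x)).mp ⟨(ord2_iff _).mpr ⟨ht0, htt⟩, (ord2_iff _).mpr ⟨hne0 ht0, hc⟩⟩)
  have hvxt2 : θ (x + θ x) + θ (x + θ x) ≠ 0 := by
    intro hc
    exact f3 ((hx' (x + θ x)).mp ⟨(ord2_iff _).mpr ⟨f1, f2⟩, (ord2_iff _).mpr ⟨hne0 f1, hc⟩⟩)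
  have havt : a = θ (θ x) ∨ a = θ (x + θ x) := by
    obtain ⟨z, hz⟩ := hsurj a
    have hz0 : z ≠ 0 := by rintro rfl; exact g1 (by rw [← hz, h0])
    have hzx : z ≠ x := by rintro rfl; exact ha2 (by rw [← hz]; exact htt)
    have hzz : z + z = 0 := by
      by_contra hzz
      exact hnim ⟨z, ⟨(ord4_iff z).mpr hzz, by rw [hz]; exact ha4⟩, hz⟩
    rcases inv3 x (θ x) z ⟨hx0, hxx, ht0, htt, htx, hz0, hzz, hzx⟩ with rfl | rfl
    · exact Or.inl hz.symm
    · exact Or.inr hz.symm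
  have hF : θ = F x (θ x) a (θ (θ x)) (θ (x + θ x)) (θ a) (θ (a + x)) (θ (a + θ x))
      (θ (a + x + θ x)) := by
    funext z
    rcases cover z with rfl | rfl | rfl | rfl | rfl | rfl | rfl | rfl
    · simp [F, h0]
    · simp [F, hx0]
    · simp [F, ht0, htx]
    · simp [F, f1, f3, f4]
    · simp [F, g1, g2, g3, g4]
    · simp [F, i1, i2, i3, i4, i5]
    · simp [F, j1, j2, j3, j4, j5, j6]
    · simp [F, k1, k2, k3, k4, k5, k6, k7]
  show Q x a θ
  rw [hF]
  exact key x (θ x) a ⟨hx0, hxx, ht0, htt, htx, ha2, cm0 hx0⟩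
    (θ (θ x)) ⟨hvt2, cm0 ht0, cmne htx⟩
    (θ (x + θ x)) ⟨hvxt2, hne f4, havt, cm0 f1, cmne f3, cmne f4⟩
    (θ a) ⟨hva2, hne g3, hne g4, cm0 g1, cmne g2, cmne g3, cmne g4⟩
    (θ (a + x)) ⟨hne0 i1, hne i2, hne i3, hne i4, hne i5, cm0 i1, cmne i2, cmne i3, cmne i4,
      cmne i5⟩
    (θ (a + θ x)) ⟨hne0 j1, hne j2, hne j3, hne j4, hne j5, hne j6, cm0 j1, cmne j2, cmne j3,
      cmne j4, cmne j5, cmne j6⟩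
    (θ (a + x + θ x)) ⟨hne0 k1, hne k2, hne k3, hne k4, hne k5, hne k6, hne k7, cm0 k1, cmne k2,
      cmne k3, cmne k4, cmne k5, cmne k6, cmne k7⟩
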